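/- Let H be a complex Hilbert space, and let L_0, L_k : H → H be bounded linear operators such that L_k is self-adjoint, L_0 is coercive (Re⟨L_0 u, u⟩ ≥ c‖u‖² for some c > 0), and L_k - L_0 is compact. If additionally ⟨L_k u, u⟩ > 0 for all u ≠ 0 in H, then L_k is injective; and if there exists a finite-dimensional subspace V ⊂ H with ⟨L_k u, u⟩ ≤ 0 for all u ∈ V, and the family t ↦ L_t is norm-continuous on an interval [k_0, k] with ⟨L_{k_0} u, u⟩ > 0 for all u ≠ 0, then there exists t ∈ [k_0, k] such that L_t has nontrivial kernel. -/

import Mathlib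

open scoped InnerProductSpace

open Filter Topology

/-- Generalized Cauchy-Schwarz: for a positive self-adjoint operator,
`‖T u‖² ≤ ‖T‖ * Re⟪T u, u⟫`. -/
lemma aux_cs {H : Type*} [NormedAddCommGroup H] [InnerProductSpace ℂ H] [CompleteSpace H]
    (T : H →L[ℂ] H) (hsa : IsSelfAdjoint T)
    (hpos : ∀ u : H, 0 ≤ (⟪T u, u⟫_ℂ).re) (u : H) :
    ‖T u‖ ^ 2 ≤ ‖T‖ * (⟪T u, u⟫_ℂ).re := by
  set v := T u with hv
  have hsymm := hsa.isSymmetric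
  -- expansion of the quadratic form at u + x • v
  have expand : ∀ x : ℝ,
      0 ≤ (⟪T v, v⟫_ℂ).re * (x * x) + (2 * ‖v‖ ^ 2) * x + (⟪T u, u⟫_ℂ).re := by
    intro x
    have h0 := hpos (u + (x : ℂ) • v)
    have h1 : ⟪T (u + (x:ℂ) • v), u + (x:ℂ) • v⟫_ℂ
        = ⟪T u, u⟫_ℂ + (x:ℂ) * ⟪T u, v⟫_ℂ + (x:ℂ) * ⟪T v, u⟫_ℂ
          + (x:ℂ) * (x:ℂ) * ⟪T v, v⟫_ℂ := by
      rw [map_add, map_smul]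
      rw [inner_add_left, inner_add_right, inner_add_right]
      rw [inner_smul_left, inner_smul_right, inner_smul_left, inner_smul_right]
      push_cast
      ring_nf
      rw [Complex.conj_ofReal]
      ring
    have h2 : ⟪T u, v⟫_ℂ = ((‖v‖ ^ 2 : ℝ) : ℂ) := by
      rw [hv]
      push_cast
      exact inner_self_eq_norm_sq_to_K (T u)
    have h3 : ⟪T v, u⟫_ℂ = ((‖v‖ ^ 2 : ℝ) : ℂ) := by
      have e1 : ⟪T v, u⟫_ℂ = ⟪v, T u⟫_ℂ := hsymm v u
      rw [e1, ← hv]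
      push_cast
      exact inner_self_eq_norm_sq_to_K v
    rw [h1, h2, h3] at h0
    simp only [Complex.add_re, Complex.mul_re, Complex.mul_im, Complex.ofReal_re, Complex.ofReal_im] at h0
    nlinarith [h0]
  have hdisc := discrim_le_zero expand
  rw [discrim] at hdisc
  have key : (‖v‖ ^ 2) ^ 2 ≤ (⟪T v, v⟫_ℂ).re * (⟪T u, u⟫_ℂ).re := by nlinarith
  have hTv : (⟪T v, v⟫_ℂ).re ≤ ‖T‖ * ‖v‖ ^ 2 := by
    calc (⟪T v, v⟫_ℂ).re ≤ ‖⟪T v, v⟫_ℂ‖ := by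
          exact Complex.re_le_norm _
      _ ≤ ‖T v‖ * ‖v‖ := norm_inner_le_norm _ _
      _ ≤ (‖T‖ * ‖v‖) * ‖v‖ := by gcongr; exact T.le_opNorm v
      _ = ‖T‖ * ‖v‖ ^ 2 := by ring
  rcases eq_or_ne v 0 with h | h
  · rw [h]; simp [mul_nonneg (norm_nonneg T) (hpos u)]
  · have hvpos : 0 < ‖v‖ ^ 2 := pow_pos (norm_pos_iff.mpr h) 2
    nlinarith [hpos u]
open Filter Topology

lemma aux_kernel {H : Type*} [NormedAddCommGroup H] [InnerProductSpace ℂ H] [CompleteSpace H]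
    (T T₀ : H →L[ℂ] H) (hsa : IsSelfAdjoint T)
    (c : ℝ) (hc : 0 < c) (hcoer : ∀ u : H, c * ‖u‖ ^ 2 ≤ (⟪T₀ u, u⟫_ℂ).re)
    (hcomp : IsCompactOperator (T - T₀))
    (hpos : ∀ u : H, 0 ≤ (⟪T u, u⟫_ℂ).re)
    (hinf : ∀ ε : ℝ, 0 < ε → ∃ u : H, ‖u‖ = 1 ∧ (⟪T u, u⟫_ℂ).re < ε)
    (hcs : ∀ u : H, ‖T u‖ ^ 2 ≤ ‖T‖ * (⟪T u, u⟫_ℂ).re) :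
    ∃ u : H, u ≠ 0 ∧ T u = 0 := by
  -- lower bound for T₀
  have hlow : ∀ w : H, c * ‖w‖ ≤ ‖T₀ w‖ := by
    intro w
    rcases eq_or_ne w 0 with rfl | hw
    · simp
    · have h1 : c * ‖w‖ ^ 2 ≤ ‖T₀ w‖ * ‖w‖ := by
        refine (hcoer w).trans ?_
        calc (⟪T₀ w, w⟫_ℂ).re ≤ ‖⟪T₀ w, w⟫_ℂ‖ := by
              exact Complex.re_le_norm _
          _ ≤ ‖T₀ w‖ * ‖w‖ := norm_inner_le_norm _ _
      have hwpos : 0 < ‖w‖ := norm_pos_iff.mpr hw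
      rw [pow_two] at h1
      refine le_of_mul_le_mul_right ?_ hwpos
      rw [mul_assoc]
      exact h1
  -- minimizing sequence
  have hseq : ∀ n : ℕ, ∃ u : H, ‖u‖ = 1 ∧ (⟪T u, u⟫_ℂ).re < 1 / (n + 1) := by
    intro n; exact hinf _ (by positivity)
  choose u hu1 hu2 using hseq
  have hq0 : Tendsto (fun n => (⟪T (u n), u n⟫_ℂ).re) atTop (𝓝 0) := by
    refine squeeze_zero (fun n => hpos _) (fun n => (hu2 n).le) ?_
    exact tendsto_one_div_add_atTop_nhds_zero_nat
  have hTu0 : Tendsto (fun n => T (u n)) atTop (𝓝 0) := by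
    rw [tendsto_zero_iff_norm_tendsto_zero]
    have hsq : Tendsto (fun n => ‖T (u n)‖ ^ 2) atTop (𝓝 0) := by
      refine squeeze_zero (fun n => by positivity) (fun n => hcs (u n)) ?_
      have := hq0.const_mul ‖T‖
      simpa using this
    have := hsq.sqrt
    simpa [Real.sqrt_sq (norm_nonneg _)] using this
  -- compactness: extract a convergent subsequence of (T - T₀) applied to a scaled sequence
  obtain ⟨K, hK, hKmem⟩ := hcomp
  obtain ⟨ε, hε, hball⟩ := Metric.mem_nhds_iff.mp hKmem
  set x : ℕ → H := fun n => (ε / 2 : ℝ) • u n with hx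
  have hxnorm : ∀ n, ‖x n‖ = ε / 2 := by
    intro n
    rw [hx]
    simp only [norm_smul, Real.norm_eq_abs, hu1 n, mul_one]
    exact abs_of_pos (by linarith)
  have hxK : ∀ n, (T - T₀) (x n) ∈ K := by
    intro n
    apply hball
    rw [Metric.mem_ball, dist_zero_right, hxnorm n]
    linarith
  obtain ⟨w, -, φ, hφ, hconv⟩ := hK.tendsto_subseq hxK
  have hTx : Tendsto (fun n => T (x n)) atTop (𝓝 0) := by
    have : (fun n => T (x n)) = fun n => (ε / 2 : ℝ) • T (u n) := by
      funext n; rw [hx]; exact T.map_smul_of_tower _ _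
    rw [this]
    simpa using hTu0.const_smul (ε / 2 : ℝ)
  have hTxφ : Tendsto (fun n => T (x (φ n))) atTop (𝓝 0) := hTx.comp hφ.tendsto_atTop
  have hT₀φ : Tendsto (fun n => T₀ (x (φ n))) atTop (𝓝 (0 - w)) := by
    have heq : (fun n => T₀ (x (φ n)))
        = fun n => T (x (φ n)) - (T - T₀) (x (φ n)) := by
      funext n; simp [ContinuousLinearMap.sub_apply]
    rw [heq]
    exact hTxφ.sub hconv
  -- x ∘ φ is Cauchy since T₀ is bounded below
  have hcauchy : CauchySeq (fun n => x (φ n)) := by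
    have hC : CauchySeq (fun n => T₀ (x (φ n))) := hT₀φ.cauchySeq
    rw [Metric.cauchySeq_iff] at hC ⊢
    intro δ hδ
    obtain ⟨N, hN⟩ := hC (c * δ) (by positivity)
    refine ⟨N, fun m hm n hn => ?_⟩
    have h1 := hN m hm n hn
    rw [dist_eq_norm] at h1 ⊢
    have h2 : c * ‖x (φ m) - x (φ n)‖ ≤ ‖T₀ (x (φ m)) - T₀ (x (φ n))‖ := by
      have := hlow (x (φ m) - x (φ n))
      rwa [map_sub] at this
    have := h2.trans_lt h1
    exact lt_of_mul_lt_mul_left (by linarith) hc.le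
  obtain ⟨z, hz⟩ := cauchySeq_tendsto_of_complete hcauchy
  have hznorm : ‖z‖ = ε / 2 := by
    have h1 : Tendsto (fun n => ‖x (φ n)‖) atTop (𝓝 ‖z‖) := hz.norm
    have h2 : (fun n => ‖x (φ n)‖) = fun _ => ε / 2 := by
      funext n; exact hxnorm _
    rw [h2] at h1
    exact (tendsto_const_nhds_iff.mp h1).symm
  refine ⟨z, ?_, ?_⟩
  · intro h0
    rw [h0, norm_zero] at hznorm
    linarith
  · have h1 : Tendsto (fun n => T (x (φ n))) atTop (𝓝 (T z)) :=
      (T.continuous.tendsto z).comp hz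
    exact tendsto_nhds_unique h1 hTxφ


/-- abstract eigenvalue-existence principle. Let `L : ℝ → (H →L H)` be a family
of bounded operators on a complex Hilbert space with `L k` self-adjoint, `L 0` coercive and
`L k - L 0` compact for each `k`. If `⟪L k u, u⟫ > 0` for all `u ≠ 0`, then `L k` is injective;
and if there is a finite-dimensional subspace `V` with `Re ⟪L k u, u⟫ ≤ 0` on `V`, the family
is norm-continuous on `[k₀, k]` and `L k₀` is positive, then some `L t`, `t ∈ [k₀, k]`,
has nontrivial kernel. -/
theorem abstract_transmission_eigenvalue_existence
    {H : Type*} [NormedAddCommGroup H] [InnerProductSpace ℂ H] [CompleteSpace H]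
    (L : ℝ → H →L[ℂ] H) (k k₀ : ℝ) (hk₀k : k₀ ≤ k)
    (hsa : ∀ t : ℝ, IsSelfAdjoint (L t))
    (c : ℝ) (hc : 0 < c) (hcoer : ∀ u : H, c * ‖u‖ ^ 2 ≤ (⟪L 0 u, u⟫_ℂ).re)
    (hcomp : ∀ t : ℝ, IsCompactOperator (L t - L 0)) :
    ((∀ u : H, u ≠ 0 → 0 < (⟪L k u, u⟫_ℂ).re) → Function.Injective (L k)) ∧
    ((∃ V : Submodule ℂ H, FiniteDimensional ℂ V ∧ V ≠ ⊥ ∧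
          ∀ u ∈ V, (⟪L k u, u⟫_ℂ).re ≤ 0) →
      (Continuous fun t : ℝ => L t) →
      (∀ u : H, u ≠ 0 → 0 < (⟪L k₀ u, u⟫_ℂ).re) →
      ∃ t ∈ Set.Icc k₀ k, ∃ u : H, u ≠ 0 ∧ L t u = 0) := by
  constructor
  · intro hpos a b hab
    by_contra hne
    have h0 : L k (a - b) = 0 := by rw [map_sub, hab, sub_self]
    have := hpos (a - b) (sub_ne_zero.mpr hne)
    rw [h0] at this
    simp at this
  · rintro ⟨V, hVfin, hVne, hVle⟩ hcont hpos₀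
    -- a unit vector in V
    obtain ⟨v₀, hv₀V, hv₀⟩ := Submodule.exists_mem_ne_zero_of_ne_bot hVne
    have hv₀n : (0:ℝ) < ‖v₀‖ := norm_pos_iff.mpr hv₀
    set e : H := (‖v₀‖⁻¹ : ℝ) • v₀ with hedef
    have henorm : ‖e‖ = 1 := by
      rw [hedef, norm_smul, Real.norm_eq_abs, abs_of_pos (inv_pos.mpr hv₀n)]
      field_simp
    have heV : e ∈ V := V.smul_of_tower_mem _ hv₀V
    have hesphere : e ∈ Metric.sphere (0:H) 1 := by
      rw [mem_sphere_zero_iff_norm]; exact henorm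
    -- the quadratic form and its infimum on the unit sphere
    set Q : ℝ → H → ℝ := fun t u' => (⟪L t u', u'⟫_ℂ).re with hQ
    set m : ℝ → ℝ := fun t => sInf (Q t '' Metric.sphere (0:H) 1) with hm
    have hne' : ∀ t, (Q t '' Metric.sphere (0:H) 1).Nonempty :=
      fun t => ⟨Q t e, e, hesphere, rfl⟩
    have habs : ∀ t (u' : H), ‖u'‖ = 1 → |Q t u'| ≤ ‖L t‖ := by
      intro t u' hu'
      calc |Q t u'| ≤ ‖⟪L t u', u'⟫_ℂ‖ := by
            exact Complex.abs_re_le_norm _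
        _ ≤ ‖L t u'‖ * ‖u'‖ := norm_inner_le_norm _ _
        _ ≤ (‖L t‖ * ‖u'‖) * ‖u'‖ := by gcongr; exact (L t).le_opNorm u'
        _ = ‖L t‖ := by rw [hu']; ring
    have hbdd : ∀ t, BddBelow (Q t '' Metric.sphere (0:H) 1) := by
      intro t
      refine ⟨-‖L t‖, ?_⟩
      rintro y ⟨u', hu', rfl⟩
      have := habs t u' (mem_sphere_zero_iff_norm.mp hu')
      linarith [neg_abs_le (Q t u')]
    have hle : ∀ t (u' : H), ‖u'‖ = 1 → m t ≤ Q t u' := by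
      intro t u' h
      exact csInf_le (hbdd t) ⟨u', mem_sphere_zero_iff_norm.mpr h, rfl⟩
    -- Lipschitz-type bound and continuity of m
    have hlip : ∀ s t : ℝ, m t ≤ m s + ‖L t - L s‖ := by
      intro s t
      rw [← sub_le_iff_le_add]
      apply le_csInf (hne' s)
      rintro y ⟨u', hu', rfl⟩
      have hu1 : ‖u'‖ = 1 := mem_sphere_zero_iff_norm.mp hu'
      have h1 : m t ≤ Q t u' := hle t u' hu1
      have h2 : Q t u' - Q s u' ≤ ‖L t - L s‖ := by
        have heq : Q t u' - Q s u' = (⟪(L t - L s) u', u'⟫_ℂ).re := by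
          simp [hQ, ContinuousLinearMap.sub_apply, inner_sub_left]
        rw [heq]
        calc (⟪(L t - L s) u', u'⟫_ℂ).re ≤ ‖⟪(L t - L s) u', u'⟫_ℂ‖ := by
              exact Complex.re_le_norm _
          _ ≤ ‖(L t - L s) u'‖ * ‖u'‖ := norm_inner_le_norm _ _
          _ ≤ (‖L t - L s‖ * ‖u'‖) * ‖u'‖ := by gcongr; exact (L t - L s).le_opNorm u'
          _ = ‖L t - L s‖ := by rw [hu1]; ring
      linarith
    have hmcont : Continuous m := by
      rw [Metric.continuous_iff]
      intro b ε hε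
      obtain ⟨δ, hδ, hδ'⟩ := Metric.continuous_iff.mp hcont b ε hε
      refine ⟨δ, hδ, fun a ha => ?_⟩
      have hd := hδ' a ha
      rw [dist_eq_norm] at hd
      rw [Real.dist_eq]
      have h1 := hlip b a
      have h2 := hlip a b
      have h3 : ‖L b - L a‖ = ‖L a - L b‖ := norm_sub_rev _ _
      rw [abs_sub_lt_iff]
      constructor <;> linarith
    -- scaling of the quadratic form
    have hscal : ∀ t (r : ℝ) (u' : H), Q t (r • u') = r ^ 2 * Q t u' := by
      intro t r u'
      have hsm : (r • u' : H) = (r : ℂ) • u' := by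
        rw [← smul_one_smul ℂ r u', Complex.real_smul, mul_one]
      simp only [hQ, hsm, map_smul, inner_smul_left, inner_smul_right, Complex.conj_ofReal]
      simp [Complex.mul_re, Complex.ofReal_re, Complex.ofReal_im]
      ring
    -- the key kernel-extraction step
    have key : ∀ t, m t = 0 → ∃ u' : H, u' ≠ 0 ∧ L t u' = 0 := by
      intro t hmt
      have hpos' : ∀ u' : H, 0 ≤ (⟪L t u', u'⟫_ℂ).re := by
        intro u'
        rcases eq_or_ne u' 0 with rfl | hu
        · simp
        · have hnorm : (0:ℝ) < ‖u'‖ := norm_pos_iff.mpr hu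
          have he1 : ‖(‖u'‖⁻¹ : ℝ) • u'‖ = 1 := by
            rw [norm_smul, Real.norm_eq_abs, abs_of_pos (inv_pos.mpr hnorm)]
            field_simp
          have h1 : 0 ≤ Q t ((‖u'‖⁻¹ : ℝ) • u') := hmt ▸ hle t _ he1
          rw [hscal] at h1
          have h2 : (0:ℝ) < ‖u'‖⁻¹ ^ 2 := by positivity
          nlinarith
      have hinf' : ∀ ε : ℝ, 0 < ε → ∃ u' : H, ‖u'‖ = 1 ∧ (⟪L t u', u'⟫_ℂ).re < ε := by
        intro ε hε
        have : sInf (Q t '' Metric.sphere (0:H) 1) < ε := hmt.trans_lt hε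
        obtain ⟨y, ⟨u', hu', rfl⟩, hy⟩ := exists_lt_of_csInf_lt (hne' t) this
        exact ⟨u', mem_sphere_zero_iff_norm.mp hu', hy⟩
      exact aux_kernel (L t) (L 0) (hsa t) c hc hcoer (hcomp t) hpos' hinf'
        (aux_cs (L t) (hsa t) hpos')
    -- m is positive at k₀
    have hmk₀ : 0 < m k₀ := by
      have h0 : 0 ≤ m k₀ := by
        apply le_csInf (hne' k₀)
        rintro y ⟨u', hu', rfl⟩
        have hu1 : ‖u'‖ = 1 := mem_sphere_zero_iff_norm.mp hu'
        exact (hpos₀ u' (by intro h; rw [h, norm_zero] at hu1; norm_num at hu1)).le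
      rcases h0.lt_or_eq with h | h
      · exact h
      · exfalso
        obtain ⟨u', hu0, hu⟩ := key k₀ h.symm
        have := hpos₀ u' hu0
        rw [hu] at this
        simp at this
    -- m is nonpositive at k
    have hmk : m k ≤ 0 := (hle k e henorm).trans (hVle e heV)
    -- intermediate value theorem
    have h0m : (0:ℝ) ∈ Set.Icc (m k) (m k₀) := ⟨hmk, hmk₀.le⟩
    obtain ⟨t, htI, ht⟩ := intermediate_value_Icc' hk₀k hmcont.continuousOn h0m
    obtain ⟨u', hu0, hu⟩ := key t ht
    exact ⟨t, htI, u', hu0, hu⟩
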